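/- Let E = { e ∈ {0,1}^ℕ : e_i = 1 ⟹ e_j = 0 for all Q(i+1) ≤ j < i }. Then for every e ∈ E and every j ≥ 0, one has e_0 S_0 + e_1 S_1 + ⋯ + e_j S_j < S_{j+1}. -/
import Mathlib


/-- The number-system space `E` associated to a kneading map `Q`:
0-1 sequences with `e_i = 1 ⟹ e_j = 0` for all `Q(i+1) ≤ j < i`. -/
def Eset (Q : ℕ → ℕ) : Set (ℕ → ℕ) :=
  {e | (∀ i, e i ≤ 1) ∧ ∀ i j, e i = 1 → Q (i + 1) ≤ j → j < i → e j = 0}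

/-- For every `e ∈ E` and every `j ≥ 0`, one has `e_0 S_0 + ⋯ + e_j S_j < S_{j+1}`. -/
theorem partial_sums_lt (S Q : ℕ → ℕ) (hS0 : S 0 = 1) (hmono : StrictMono S)
    (hQ : ∀ k, 1 ≤ k → Q k < k) (hrec : ∀ k, 1 ≤ k → S k = S (k - 1) + S (Q k))
    (e : ℕ → ℕ) (he : e ∈ Eset Q) :
    ∀ j : ℕ, (∑ i ∈ Finset.range (j + 1), e i * S i) < S (j + 1) := by
  obtain ⟨h01, hcons⟩ := he
  have hSpos : ∀ n, 0 < S n := by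
    intro n
    have : S 0 ≤ S n := hmono.monotone (Nat.zero_le n)
    omega
  intro j
  induction j using Nat.strong_induction_on with
  | _ j ih =>
    rcases Nat.le_one_iff_eq_zero_or_eq_one.mp (h01 j) with h | h
    · rw [Finset.sum_range_succ, h, zero_mul, add_zero]
      cases j with
      | zero => simpa using hSpos 1
      | succ n =>
        exact lt_trans (ih n (Nat.lt_succ_self n)) (hmono (by omega))
    · rw [Finset.sum_range_succ, h, one_mul]
      have hQj : Q (j + 1) ≤ j := by have := hQ (j + 1) (by omega); omega
      have hsplit : (∑ i ∈ Finset.range j, e i * S i)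
          = ∑ i ∈ Finset.range (Q (j + 1)), e i * S i := by
        rw [← Finset.sum_range_add_sum_Ico _ hQj]
        have : ∑ i ∈ Finset.Ico (Q (j + 1)) j, e i * S i = 0 := by
          apply Finset.sum_eq_zero
          intro i hi
          rw [Finset.mem_Ico] at hi
          rw [hcons j i h hi.1 hi.2, zero_mul]
        omega
      have hlt : (∑ i ∈ Finset.range (Q (j + 1)), e i * S i) < S (Q (j + 1)) := by
        rcases Nat.eq_zero_or_pos (Q (j + 1)) with hz | hp
        · rw [hz]; simpa using hSpos 0
        · have := ih (Q (j + 1) - 1) (by omega)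
          have heq : Q (j + 1) - 1 + 1 = Q (j + 1) := by omega
          rwa [heq] at this
      have hr := hrec (j + 1) (by omega)
      simp only [Nat.add_sub_cancel] at hr
      omega
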